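/- arXiv:1111.2002 — 2 statements merged into one kernel-verified Lean document; each statement's English description precedes it below -/
import Mathlib

section
/- Let ℓ be an odd prime, R the ring of integers of the unramified quadratic extension of ℚ_ℓ, with x ↦ x̄ the nontrivial continuous automorphism. Let h ∈ M₂(R) be nonzero and hermitian (h* = h, where h* is the conjugate transpose), and let ε(h) be the largest integer e such that ℓ^{−e} h ∈ M₂(R). Then for every positive integer m there exist u ∈ SL₂(R) and a, d ∈ ℤ_ℓ with ℓ ∤ a such that u* h u ≡ ℓ^{ε(h)} diag(a, d) modulo ℓ^m M₂(R). -/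
open Matrix

/-- Diagonalization of hermitian matrices modulo `ℓ^m` over the ring of integers `R` of the
unramified quadratic extension of `ℚ_ℓ` (Krieg): if `h ≠ 0` is hermitian with `ε(h) = e`,
then `u* h u ≡ ℓ^e diag(a,d) (mod ℓ^m)` for some `u ∈ SL₂(R)`, `a, d ∈ ℤ_ℓ`, `ℓ ∤ a`. -/
theorem stmt_6 (ℓ : ℕ) [Fact ℓ.Prime] (hℓodd : Odd ℓ)
    (E : Type*) [Field E] [Algebra ℚ_[ℓ] E] [Algebra ℤ_[ℓ] E]
    [IsScalarTower ℤ_[ℓ] ℚ_[ℓ] E]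
    (h2 : Module.finrank ℚ_[ℓ] E = 2)
    (R : Subalgebra ℤ_[ℓ] E) (hR : R = integralClosure ℤ_[ℓ] E)
    (hunram : (Ideal.span {(ℓ : R)}).IsMaximal)
    (σ : E ≃ₐ[ℚ_[ℓ]] E) (hσ : σ ≠ 1)
    (h : Matrix (Fin 2) (Fin 2) E)
    (hint : ∀ i j, h i j ∈ R)
    (hherm : ∀ i j, h i j = σ (h j i))
    (hne : h ≠ 0)
    (e : ℕ)
    (he1 : ∀ i j, ∃ r ∈ R, h i j = (ℓ : E) ^ e * r)
    (he2 : ¬ ∀ i j, ∃ r ∈ R, h i j = (ℓ : E) ^ (e + 1) * r)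
    (m : ℕ) (hm : 0 < m) :
    ∃ (u : Matrix (Fin 2) (Fin 2) E) (a d : ℤ_[ℓ]),
      (∀ i j, u i j ∈ R) ∧ u.det = 1 ∧ ¬ (ℓ : ℤ_[ℓ]) ∣ a ∧
      ∀ i j, ∃ r ∈ R,
        ((Matrix.of fun i j => σ (u j i)) * h * u) i j
          - (ℓ : E) ^ e *
              (Matrix.diagonal ![algebraMap ℤ_[ℓ] E a, algebraMap ℤ_[ℓ] E d]) i j
          = (ℓ : E) ^ m * r := by
  subst hR
  haveI : FiniteDimensional ℚ_[ℓ] E := FiniteDimensional.of_finrank_pos (by omega)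
  have hFinj : Function.Injective (algebraMap ℚ_[ℓ] E) := (algebraMap ℚ_[ℓ] E).injective
  -- σ is an involution
  have hcard : Fintype.card (E ≃ₐ[ℚ_[ℓ]] E) ≤ 2 := by
    calc Fintype.card (E ≃ₐ[ℚ_[ℓ]] E) = Fintype.card (E →ₐ[ℚ_[ℓ]] E) :=
          Fintype.card_congr (algEquivEquivAlgHom ℚ_[ℓ] E).toEquiv
      _ ≤ Module.finrank E (E →ₗ[ℚ_[ℓ]] E) := finrank_algHom ℚ_[ℓ] E
      _ = Module.finrank ℚ_[ℓ] E := Module.finrank_linearMap_self ℚ_[ℓ] E E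
      _ = 2 := h2
  have hσσ : ∀ x, σ (σ x) = x := by
    have hdvd : orderOf σ ∣ Fintype.card (E ≃ₐ[ℚ_[ℓ]] E) := orderOf_dvd_card
    have h1 : orderOf σ ≠ 1 := fun hc => hσ (orderOf_eq_one_iff.mp hc)
    have hpos : 0 < orderOf σ := orderOf_pos σ
    have hle : orderOf σ ≤ 2 := le_trans (Nat.le_of_dvd Fintype.card_pos hdvd) hcard
    have h2' : orderOf σ = 2 := by omega
    have hs : σ ^ 2 = 1 := h2' ▸ pow_orderOf_eq_one σ
    intro x
    have := congrArg (fun f : E ≃ₐ[ℚ_[ℓ]] E => f x) hs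
    simpa [sq, AlgEquiv.mul_apply] using this
  have h2E : (2 : E) ≠ 0 := by
    rw [show (2:E) = algebraMap ℚ_[ℓ] E 2 from (_root_.map_ofNat _ 2).symm]
    intro hc
    exact (two_ne_zero : (2:ℚ_[ℓ]) ≠ 0) (hFinj (by simpa using hc))
  -- σ-fixed elements come from ℚ_[ℓ]
  have hfix : ∀ x : E, σ x = x → ∃ p : ℚ_[ℓ], algebraMap ℚ_[ℓ] E p = x := by
    obtain ⟨α0, hα0⟩ : ∃ x : E, σ x ≠ x := by
      by_contra hc; push_neg at hc
      exact hσ (AlgEquiv.ext fun x => (hc x).trans (AlgEquiv.one_apply x).symm)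
    set β : E := α0 - σ α0 with hβ
    have hσβ : σ β = -β := by
      simp only [hβ, _root_.map_sub, hσσ]; ring
    have hβ0 : β ≠ 0 := sub_ne_zero.mpr (Ne.symm hα0)
    have hli : LinearIndependent ℚ_[ℓ] ![(1:E), β] := by
      rw [LinearIndependent.pair_iff' (one_ne_zero)]
      intro a hc
      have h1 : β = algebraMap ℚ_[ℓ] E a := by rw [← hc, Algebra.smul_def, mul_one]
      have h2 : σ β = β := by rw [h1, AlgEquiv.commutes]
      rw [hσβ] at h2
      have : (2:E) * β = 0 := by linear_combination - h2
      rcases mul_eq_zero.mp this with hc' | hc'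
      · exact h2E hc'
      · exact hβ0 hc'
    let hb : Module.Basis (Fin 2) ℚ_[ℓ] E := basisOfLinearIndependentOfCardEqFinrank hli (by simp [h2])
    have hbc : ∀ i, hb i = ![(1:E), β] i := fun i => by
      simp only [hb, coe_basisOfLinearIndependentOfCardEqFinrank]
    intro x hx
    set p := hb.repr x 0 with hp
    set q := hb.repr x 1 with hq'
    have hs := hb.sum_repr x
    rw [Fin.sum_univ_two, hbc 0, hbc 1] at hs
    simp only [Matrix.cons_val_zero, Matrix.cons_val_one, Matrix.head_cons] at hs
    have hrepr : x = algebraMap ℚ_[ℓ] E p + algebraMap ℚ_[ℓ] E q * β := by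
      rw [← hs]; simp [Algebra.smul_def]; rfl
    have hσx : x = algebraMap ℚ_[ℓ] E p - algebraMap ℚ_[ℓ] E q * β := by
      conv_lhs => rw [← hx, hrepr]
      rw [_root_.map_add, _root_.map_mul, AlgEquiv.commutes, AlgEquiv.commutes, hσβ]; ring
    have hq0 : algebraMap ℚ_[ℓ] E q * β = 0 := by
      have h20 : (2:E) * (algebraMap ℚ_[ℓ] E q * β) = 0 := by linear_combination hσx - hrepr
      rcases mul_eq_zero.mp h20 with hc' | hc'
      · exact absurd hc' h2E
      · exact hc'
    exact ⟨p, by rw [hrepr, hq0, add_zero]⟩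
  -- units of the integral closure
  have hunit : ∀ x : E, x ∈ integralClosure ℤ_[ℓ] E →
      (¬ ∃ r ∈ integralClosure ℤ_[ℓ] E, x = (ℓ:E) * r) →
      ∃ y ∈ integralClosure ℤ_[ℓ] E, x * y = 1 := by
    intro x hx hnd
    have hxu : IsUnit (⟨x, hx⟩ : integralClosure ℤ_[ℓ] E) := by
      by_contra hnu
      obtain ⟨M, hM, hxM⟩ := Ideal.exists_le_maximal
        (Ideal.span {(⟨x, hx⟩ : integralClosure ℤ_[ℓ] E)})
        (by rw [Ne, Ideal.span_singleton_eq_top]; exact hnu)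
      have hℓM : (ℓ : integralClosure ℤ_[ℓ] E) ∈ M := by
        have hcm : (M.comap (algebraMap ℤ_[ℓ] (integralClosure ℤ_[ℓ] E))).IsMaximal :=
          Ideal.isMaximal_comap_of_isIntegral_of_isMaximal M
        have heq : M.comap (algebraMap ℤ_[ℓ] (integralClosure ℤ_[ℓ] E))
            = IsLocalRing.maximalIdeal ℤ_[ℓ] := IsLocalRing.eq_maximalIdeal hcm
        have hmem : (ℓ:ℤ_[ℓ]) ∈ M.comap (algebraMap ℤ_[ℓ] (integralClosure ℤ_[ℓ] E)) := by
          rw [heq, PadicInt.maximalIdeal_eq_span_p]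
          exact Ideal.mem_span_singleton_self _
        simpa [Ideal.mem_comap, _root_.map_natCast] using hmem
      have hMeq : M = Ideal.span {(ℓ : integralClosure ℤ_[ℓ] E)} :=
        (hunram.eq_of_le hM.ne_top ((Ideal.span_singleton_le_iff_mem M).mpr hℓM)).symm
      have hxin : (⟨x, hx⟩ : integralClosure ℤ_[ℓ] E)
          ∈ Ideal.span {(ℓ : integralClosure ℤ_[ℓ] E)} :=
        hMeq ▸ hxM (Ideal.mem_span_singleton_self _)
      obtain ⟨c, hc⟩ := Ideal.mem_span_singleton'.mp hxin
      refine hnd ⟨(c:E), c.2, ?_⟩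
      have := congrArg (Subtype.val) hc
      simp only [Submonoid.coe_mul] at this
      rw [← this]
      push_cast
      ring
    obtain ⟨v, hv⟩ := hxu
    refine ⟨((v⁻¹ : _ˣ) : integralClosure ℤ_[ℓ] E), ((v⁻¹ : _ˣ) : integralClosure ℤ_[ℓ] E).2, ?_⟩
    have : ((v : integralClosure ℤ_[ℓ] E) : E) * ((v⁻¹ : _ˣ) : integralClosure ℤ_[ℓ] E) = 1 := by
      norm_cast
      rw [mul_inv_cancel]
      rfl
    rw [← this, hv]
  -- 2 is not in ℓR
  have h2R : ¬ ∃ r ∈ integralClosure ℤ_[ℓ] E, (2:E) = (ℓ:E) * r := by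
    rintro ⟨r, hrR, hr⟩
    have h2u : IsUnit ((2:ℤ_[ℓ])) := by
      by_contra hnu
      have := PadicInt.not_isUnit_iff.mp hnu
      rw [show ((2:ℤ_[ℓ])) = ((2:ℤ):ℤ_[ℓ]) by push_cast; ring] at this
      rw [PadicInt.norm_int_lt_one_iff_dvd] at this
      have hd : ℓ ∣ 2 := by exact_mod_cast this
      have : ℓ = 2 := (Nat.prime_dvd_prime_iff_eq Fact.out Nat.prime_two).mp hd
      rw [this] at hℓodd
      simp [Nat.odd_iff] at hℓodd
    have h2u' : IsUnit ((2 : integralClosure ℤ_[ℓ] E)) := by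
      have : ((2 : integralClosure ℤ_[ℓ] E)) = algebraMap ℤ_[ℓ] _ (2:ℤ_[ℓ]) := by
        rw [_root_.map_ofNat]
      rw [this]
      exact h2u.map _
    have heq2 : (2 : integralClosure ℤ_[ℓ] E) = (ℓ : integralClosure ℤ_[ℓ] E) * ⟨r, hrR⟩ := by
      apply Subtype.ext
      push_cast
      exact hr
    have : IsUnit ((ℓ : integralClosure ℤ_[ℓ] E)) := isUnit_of_mul_isUnit_left (heq2 ▸ h2u')
    exact hunram.ne_top (Ideal.span_singleton_eq_top.mpr this)
  -- σ-fixed integral elements come from ℤ_[ℓ]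
  have hZ : ∀ x : E, x ∈ integralClosure ℤ_[ℓ] E → σ x = x →
      ∃ a : ℤ_[ℓ], algebraMap ℤ_[ℓ] E a = x := by
    intro x hx hfx
    obtain ⟨p, hp⟩ := hfix x hfx
    have hpint : IsIntegral ℤ_[ℓ] p := by
      rw [← isIntegral_algebraMap_iff hFinj, hp]
      exact hx
    obtain ⟨a, ha⟩ := IsIntegrallyClosed.isIntegral_iff.mp hpint
    exact ⟨a, by rw [IsScalarTower.algebraMap_apply ℤ_[ℓ] ℚ_[ℓ] E, ha, hp]⟩
  -- σ preserves the integral closure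
  have hσR : ∀ x : E, x ∈ integralClosure ℤ_[ℓ] E → σ x ∈ integralClosure ℤ_[ℓ] E := by
    intro x hx
    exact IsIntegral.map (AlgHom.restrictScalars ℤ_[ℓ] σ.toAlgHom) hx
  -- basic facts about ℓ in E
  have hℓE : ((ℓ:ℕ):E) ≠ 0 := by
    rw [show ((ℓ:ℕ):E) = algebraMap ℚ_[ℓ] E ((ℓ:ℕ):ℚ_[ℓ]) from (_root_.map_natCast _ ℓ).symm]
    intro hc
    have hc2 : ((ℓ:ℕ):ℚ_[ℓ]) = 0 := hFinj (by simpa using hc)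
    exact (Nat.cast_ne_zero.mpr (Fact.out (p := ℓ.Prime)).ne_zero) hc2
  set P : E := ((ℓ:ℕ):E) with hPdef
  have hσP : σ P = P := _root_.map_natCast σ ℓ
  have hpe : P ^ e ≠ 0 := pow_ne_zero _ hℓE
  -- the normalized matrix h'
  set h' : Matrix (Fin 2) (Fin 2) E := Matrix.of fun i j => h i j / P ^ e with hh'def
  have hh'R : ∀ i j, h' i j ∈ integralClosure ℤ_[ℓ] E := by
    intro i j
    obtain ⟨r, hrR, hr⟩ := he1 i j
    have hx : h' i j = r := by
      rw [hh'def]; simp only [Matrix.of_apply]; rw [hr]; field_simp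
    rw [hx]; exact hrR
  have hhe : ∀ i j, h i j = P ^ e * h' i j := by
    intro i j; rw [hh'def]; simp only [Matrix.of_apply]; field_simp
  have hσh' : ∀ i j, σ (h' i j) = h' j i := by
    intro i j
    rw [hh'def]; simp only [Matrix.of_apply]
    rw [_root_.map_div₀, _root_.map_pow, hσP, ← hherm j i]
  -- some entry of h' is a unit
  have hent : ∃ i j, ¬ ∃ r ∈ integralClosure ℤ_[ℓ] E, h' i j = P * r := by
    by_contra hc
    push_neg at hc
    apply he2
    intro i j
    obtain ⟨r, hrR, hr⟩ := hc i j
    refine ⟨r, hrR, ?_⟩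
    rw [hhe i j, hr, pow_succ]
    ring
  -- stage 1: make the (0,0) entry a unit
  have stage1 : ∃ u₀ : Matrix (Fin 2) (Fin 2) E,
      (∀ i j, u₀ i j ∈ integralClosure ℤ_[ℓ] E) ∧ u₀.det = 1 ∧
      ¬ ∃ r ∈ integralClosure ℤ_[ℓ] E,
        ((Matrix.of fun i j => σ (u₀ j i)) * h' * u₀) 0 0 = P * r := by
    by_cases hA : ∃ r ∈ integralClosure ℤ_[ℓ] E, h' 0 0 = P * r
    swap
    · refine ⟨1, ?_, Matrix.det_one, ?_⟩
      · intro i j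
        by_cases hij : i = j
        · simp [Matrix.one_apply, hij, Subalgebra.one_mem]
        · simp [Matrix.one_apply, hij, Subalgebra.zero_mem]
      · rintro ⟨r, hrR, hr⟩
        simp [Matrix.mul_apply, Fin.sum_univ_two, Matrix.one_apply] at hr
        exact hA ⟨r, hrR, hr⟩
    by_cases hB : ∃ r ∈ integralClosure ℤ_[ℓ] E, h' 1 1 = P * r
    swap
    · refine ⟨!![0,-1;(1:E),0], ?_, by simp [Matrix.det_fin_two_of], ?_⟩
      · intro i j
        fin_cases i <;> fin_cases j <;>
          simp [Subalgebra.one_mem, Subalgebra.zero_mem,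
            Subalgebra.neg_mem _ (Subalgebra.one_mem _)]
      · rintro ⟨r, hrR, hr⟩
        simp [Matrix.mul_apply, Fin.sum_univ_two] at hr
        exact hB ⟨r, hrR, hr⟩
    · obtain ⟨a₁, ha₁R, ha₁⟩ := hA
      obtain ⟨d₁, hd₁R, hd₁⟩ := hB
      have hb : ¬ ∃ r ∈ integralClosure ℤ_[ℓ] E, h' 0 1 = P * r := by
        obtain ⟨i, j, hij⟩ := hent
        fin_cases i <;> fin_cases j <;>
          simp only [Fin.zero_eta, Fin.mk_one, Fin.isValue] at hij
        · exact absurd ⟨a₁, ha₁R, ha₁⟩ hij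
        · exact hij
        · rintro ⟨r, hrR, hr⟩
          refine hij ⟨σ r, hσR r hrR, ?_⟩
          rw [show h' 1 0 = σ (h' 0 1) from (hσh' 0 1).symm, hr, _root_.map_mul, hσP]
        · exact absurd ⟨d₁, hd₁R, hd₁⟩ hij
      obtain ⟨t, htR, hbt⟩ := hunit (h' 0 1) (hh'R 0 1) hb
      have hστ : σ t * h' 1 0 = 1 := by
        rw [show h' 1 0 = σ (h' 0 1) from (hσh' 0 1).symm, ← _root_.map_mul, mul_comm, hbt, _root_.map_one]
      refine ⟨!![(1:E),0;t,1], ?_, by simp [Matrix.det_fin_two_of], ?_⟩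
      · intro i j
        fin_cases i <;> fin_cases j <;>
          simp [Subalgebra.one_mem, Subalgebra.zero_mem, htR]
      · rintro ⟨r, hrR, hr⟩
        have hentry : ((Matrix.of fun i j => σ ((!![(1:E),0;t,1]) j i)) * h' * !![(1:E),0;t,1]) 0 0
            = 2 + P * a₁ + σ t * (P * d₁) * t := by
          simp only [Matrix.mul_apply, Fin.sum_univ_two, Matrix.of_apply,
            Matrix.cons_val', Matrix.cons_val_zero, Matrix.cons_val_one, Matrix.head_cons,
            Matrix.head_fin_const, Matrix.empty_val', Matrix.cons_val_fin_one,
            _root_.map_one, _root_.map_zero]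
          rw [ha₁, hd₁]
          linear_combination hbt + hστ
        rw [hentry] at hr
        apply h2R
        refine ⟨r - a₁ - σ t * d₁ * t,
          sub_mem (sub_mem hrR ha₁R) (mul_mem (mul_mem (hσR t htR) hd₁R) htR), ?_⟩
        linear_combination hr
  -- stage 2: clear the off-diagonal entries
  obtain ⟨u₀, hu₀R, hu₀det, hα⟩ := stage1
  obtain ⟨g, hgdef⟩ : ∃ g : Matrix (Fin 2) (Fin 2) E,
      (Matrix.of fun i j => σ (u₀ j i)) * h' * u₀ = g := ⟨_, rfl⟩
  rw [hgdef] at hα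
  have hgR : ∀ i j, g i j ∈ integralClosure ℤ_[ℓ] E := by
    intro i j
    rw [← hgdef]
    simp only [Matrix.mul_apply, Fin.sum_univ_two, Matrix.of_apply]
    exact add_mem
      (mul_mem (add_mem (mul_mem (hσR _ (hu₀R _ _)) (hh'R _ _))
        (mul_mem (hσR _ (hu₀R _ _)) (hh'R _ _))) (hu₀R _ _))
      (mul_mem (add_mem (mul_mem (hσR _ (hu₀R _ _)) (hh'R _ _))
        (mul_mem (hσR _ (hu₀R _ _)) (hh'R _ _))) (hu₀R _ _))
  have hσg : ∀ i j, σ (g i j) = g j i := by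
    intro i j
    rw [← hgdef]
    simp only [Matrix.mul_apply, Fin.sum_univ_two, Matrix.of_apply, _root_.map_add,
      _root_.map_mul, hσσ, hσh']
    ring
  have hσα : σ (g 0 0) = g 0 0 := hσg 0 0
  obtain ⟨y, hyR, hy⟩ := hunit (g 0 0) (hgR 0 0) hα
  have hα0 : g 0 0 ≠ 0 := left_ne_zero_of_mul_eq_one hy
  have hσy : σ y = y := by
    have h1 : g 0 0 * σ y = 1 := by
      have hx := congrArg σ hy; rw [_root_.map_mul, hσα, _root_.map_one] at hx; exact hx
    exact mul_left_cancel₀ hα0 (h1.trans hy.symm)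
  have hg10 : g 1 0 = σ (g 0 1) := (hσg 0 1).symm
  obtain ⟨a, ha⟩ := hZ (g 0 0) (hgR 0 0) hσα
  have hδR : g 1 1 - σ (g 0 1) * g 0 1 * y ∈ integralClosure ℤ_[ℓ] E :=
    sub_mem (hgR 1 1) (mul_mem (mul_mem (hσR _ (hgR 0 1)) (hgR 0 1)) hyR)
  have hσδ : σ (g 1 1 - σ (g 0 1) * g 0 1 * y) = g 1 1 - σ (g 0 1) * g 0 1 * y := by
    rw [_root_.map_sub, hσg 1 1, _root_.map_mul, _root_.map_mul, hσσ, hσy, hσg 0 1]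
    ring
  obtain ⟨d, hd⟩ := hZ (g 1 1 - σ (g 0 1) * g 0 1 * y) hδR hσδ
  have hu₁R : ∀ i j, (!![1, -(g 0 1 * y); 0, 1] : Matrix (Fin 2) (Fin 2) E) i j
      ∈ integralClosure ℤ_[ℓ] E := by
    intro i j
    fin_cases i <;> fin_cases j <;>
      simp [Subalgebra.one_mem, Subalgebra.zero_mem,
        Subalgebra.neg_mem _ (mul_mem (hgR 0 1) hyR)]
  refine ⟨u₀ * !![1, -(g 0 1 * y); 0, 1], a, d, ?_, ?_, ?_, ?_⟩
  · intro i j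
    simp only [Matrix.mul_apply, Fin.sum_univ_two]
    exact add_mem (mul_mem (hu₀R _ _) (hu₁R _ _)) (mul_mem (hu₀R _ _) (hu₁R _ _))
  · rw [Matrix.det_mul, hu₀det]
    simp [Matrix.det_fin_two_of]
  · rintro ⟨b, hb'⟩
    apply hα
    refine ⟨algebraMap ℤ_[ℓ] E b, isIntegral_algebraMap, ?_⟩
    calc g 0 0 = algebraMap ℤ_[ℓ] E a := ha.symm
      _ = algebraMap ℤ_[ℓ] E ((ℓ:ℤ_[ℓ]) * b) := by rw [← hb']
      _ = P * algebraMap ℤ_[ℓ] E b := by rw [_root_.map_mul, _root_.map_natCast]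
  · intro i j
    refine ⟨0, Subalgebra.zero_mem _, ?_⟩
    rw [mul_zero, sub_eq_zero]
    have hsm : h = (P^e : E) • h' := by
      ext i j
      simp only [Matrix.smul_apply, smul_eq_mul]
      exact hhe i j
    have hct : (Matrix.of fun i j => σ ((u₀ * !![1, -(g 0 1 * y); 0, 1]) j i))
        = (Matrix.of fun i j => σ ((!![1, -(g 0 1 * y); 0, 1] : Matrix (Fin 2) (Fin 2) E) j i))
          * (Matrix.of fun i j => σ (u₀ j i)) := by
      ext i j
      simp only [Matrix.of_apply, Matrix.mul_apply, Fin.sum_univ_two, _root_.map_add,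
        _root_.map_mul]
      ring
    have hkey : (Matrix.of fun i j => σ ((u₀ * !![1, -(g 0 1 * y); 0, 1]) j i)) * h
          * (u₀ * !![1, -(g 0 1 * y); 0, 1])
        = (P:E)^e • ((Matrix.of fun i j => σ ((!![1, -(g 0 1 * y); 0, 1]
            : Matrix (Fin 2) (Fin 2) E) j i)) * g * !![1, -(g 0 1 * y); 0, 1]) := by
      rw [hct, hsm]
      simp only [Matrix.smul_mul, Matrix.mul_smul]
      congr 1
      rw [← hgdef]
      simp only [← mul_assoc]
    have hdiag : (Matrix.of fun i j => σ ((!![1, -(g 0 1 * y); 0, 1]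
            : Matrix (Fin 2) (Fin 2) E) j i)) * g * !![1, -(g 0 1 * y); 0, 1]
        = Matrix.diagonal ![g 0 0, g 1 1 - σ (g 0 1) * g 0 1 * y] := by
      ext i j
      fin_cases i <;> fin_cases j <;>
        simp only [Matrix.mul_apply, Fin.sum_univ_two, Matrix.of_apply,
          Matrix.cons_val', Matrix.cons_val_zero, Matrix.cons_val_one, Matrix.head_cons,
          Matrix.head_fin_const, Matrix.empty_val', Matrix.cons_val_fin_one,
          _root_.map_one, _root_.map_zero, _root_.map_neg, _root_.map_mul, hσy,
          Fin.zero_eta, Fin.mk_one, Matrix.diagonal_apply, Fin.isValue, one_ne_zero,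
          zero_ne_one, if_true, if_false, ite_true, ite_false, reduceIte]
      · ring
      · linear_combination (-(g 0 1)) * hy
      · rw [hg10]; linear_combination (-(σ (g 0 1))) * hy
      · rw [hg10]; linear_combination (σ (g 0 1) * g 0 1 * y) * hy
    rw [hkey, hdiag, Matrix.smul_apply, smul_eq_mul]
    congr 1
    rw [ha, hd]
end

section
/- Let p be a prime, n ≥ 1, 0 ≤ k ≤ n, and let K = GL_n(ℤ_p). The double coset K · diag(p,…,p,1,…,1) · K (with k entries equal to p) is a disjoint union of exactly \binom{n}{k}_p left cosets Kg, where \binom{n}{k}_p = ∏_{i=1}^{k} (p^{n−k+i} − 1)/(p^{i} − 1) is the Gaussian binomial coefficient. -/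
open Matrix Finset
open scoped MatrixGroups Pointwise



theorem my_decomp {G₀ G : Type*} [Group G₀] [Group G] (Φ : G₀ →* G)
    (hΦ : Function.Injective Φ) (K : Subgroup G) (hK : K = Φ.range) (g : G)
    (H' : Subgroup G₀) (hH : ∀ u : G₀, u ∈ H' ↔ g * Φ u * g⁻¹ ∈ K)
    [Fintype (G₀ ⧸ H')] :
    ∃ T : Finset G, T.card = Nat.card (G₀ ⧸ H') ∧
      ((K : Set G) * {g} * (K : Set G)
        = ⋃ t ∈ (T : Set G), (K : Set G) * {t}) ∧
      (T : Set G).PairwiseDisjoint (fun t => (K : Set G) * {t}) := by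
  classical
  set s : G₀ ⧸ H' → G₀ := Quotient.out with hs
  set f : G₀ ⧸ H' → G := fun q => g * (Φ (s q))⁻¹ with hf
  have hmemK : ∀ x, x ∈ K ↔ ∃ u : G₀, Φ u = x := by
    intro x; rw [hK]; exact MonoidHom.mem_range
  have hmem_coset : ∀ (t x : G), x ∈ (K : Set G) * {t} ↔ ∃ a ∈ K, a * t = x := by
    intro t x
    constructor
    · intro hx
      obtain ⟨a, ha, b, hb, rfl⟩ := Set.mem_mul.1 hx
      rcases Set.mem_singleton_iff.1 hb
      exact ⟨a, ha, rfl⟩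
    · rintro ⟨a, ha, rfl⟩
      exact Set.mem_mul.2 ⟨a, ha, t, rfl, rfl⟩
  have hmem_double : ∀ x : G, x ∈ (K : Set G) * {g} * (K : Set G) ↔
      ∃ a ∈ K, ∃ b ∈ K, a * g * b = x := by
    intro x
    constructor
    · intro hx
      obtain ⟨y, hy, b, hb, rfl⟩ := Set.mem_mul.1 hx
      obtain ⟨a, ha, t, ht, rfl⟩ := Set.mem_mul.1 hy
      rcases Set.mem_singleton_iff.1 ht
      exact ⟨a, ha, b, hb, rfl⟩
    · rintro ⟨a, ha, b, hb, rfl⟩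
      exact Set.mem_mul.2 ⟨a * g, Set.mem_mul.2 ⟨a, ha, g, rfl, rfl⟩, b, hb, rfl⟩
  have hfinj : Function.Injective f := by
    intro q q' h
    have h2 : Φ (s q) = Φ (s q') := inv_injective (mul_left_cancel h)
    have h3 : s q = s q' := hΦ h2
    have := congrArg (QuotientGroup.mk (s := H')) h3
    simpa [hs] using this
  have key : ∀ q q' (x : G), x ∈ (K : Set G) * {f q} → x ∈ (K : Set G) * {f q'} → q = q' := by
    intro q q' x hx hx'
    obtain ⟨a, ha, rfl⟩ := (hmem_coset _ _).1 hx
    obtain ⟨a', ha', heq⟩ := (hmem_coset _ _).1 hx'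
    obtain ⟨α, rfl⟩ := (hmemK a).1 ha
    obtain ⟨α', rfl⟩ := (hmemK a').1 ha'
    rw [hf] at heq
    have h2 : Φ α' = Φ α * (g * (Φ (s q))⁻¹) * (g * (Φ (s q'))⁻¹)⁻¹ := by
      rw [← heq]; group
    have hw : g * Φ ((s q)⁻¹ * s q') * g⁻¹ = Φ (α⁻¹ * α') := by
      rw [_root_.map_mul, _root_.map_mul, _root_.map_inv, _root_.map_inv, h2]; group
    have hu : (s q)⁻¹ * s q' ∈ H' := (hH _).2 (by rw [hw]; exact (hmemK _).2 ⟨_, rfl⟩)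
    have : (QuotientGroup.mk (s := H') (s q)) = QuotientGroup.mk (s q') :=
      (QuotientGroup.eq (s := H')).2 hu
    simpa [hs] using this
  refine ⟨Finset.image f Finset.univ, ?_, ?_, ?_⟩
  · rw [Finset.card_image_of_injective _ hfinj, Finset.card_univ, Nat.card_eq_fintype_card]
  · ext x
    rw [Set.mem_iUnion₂, hmem_double]
    constructor
    · rintro ⟨a, ha, b, hb, rfl⟩
      obtain ⟨v, rfl⟩ := (hmemK b).1 hb
      set q : G₀ ⧸ H' := QuotientGroup.mk v⁻¹ with hq
      have hrel : v * s q ∈ H' := by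
        have h0 : (QuotientGroup.mk (s := H') v⁻¹) = QuotientGroup.mk (s q) := by
          simp [hs, hq]
        have := (QuotientGroup.eq (s := H')).1 h0
        simpa using this
      have hc : g * Φ (v * s q) * g⁻¹ ∈ K := (hH _).1 hrel
      refine ⟨f q, ?_, (hmem_coset _ _).2 ⟨a * (g * Φ (v * s q) * g⁻¹), mul_mem ha hc, ?_⟩⟩
      · simp only [Finset.coe_image, Finset.coe_univ, Set.image_univ]
        exact ⟨q, rfl⟩
      · rw [hf]
        simp only [_root_.map_mul]
        group
    · rintro ⟨t, ht, hx⟩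
      simp only [Finset.coe_image, Finset.coe_univ, Set.image_univ, Set.mem_range] at ht
      obtain ⟨q, rfl⟩ := ht
      obtain ⟨a, ha, rfl⟩ := (hmem_coset _ _).1 hx
      have hsq : (Φ (s q))⁻¹ ∈ K := by
        rw [← _root_.map_inv]
        exact (hmemK _).2 ⟨_, rfl⟩
      exact ⟨a, ha, (Φ (s q))⁻¹, hsq, by rw [hf]; group⟩
  · intro t ht t' ht' hne
    simp only [Finset.coe_image, Finset.coe_univ, Set.image_univ, Set.mem_range] at ht ht'
    obtain ⟨q, rfl⟩ := ht
    obtain ⟨q', rfl⟩ := ht'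
    simp only [Function.onFun]
    rw [Set.disjoint_left]
    intro x hx hx'
    exact hne (congrArg f (key q q' x hx hx'))



theorem my_factor (p : ℕ) (j : ℕ) :
    ∏ i ∈ range j, ((p : ℤ) ^ j - (p : ℤ) ^ i)
      = (p : ℤ) ^ (∑ i ∈ range j, i) * ∏ i ∈ range j, ((p : ℤ) ^ (i + 1) - 1) := by
  have step1 : ∏ i ∈ range j, ((p : ℤ) ^ j - (p : ℤ) ^ i)
      = ∏ i ∈ range j, ((p : ℤ) ^ i * ((p : ℤ) ^ (j - i) - 1)) := by
    refine prod_congr rfl fun i hi => ?_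
    rw [mul_sub, mul_one, ← pow_add]
    congr 2
    rw [mem_range] at hi
    omega
  have step3 : ∏ i ∈ range j, ((p : ℤ) ^ (j - i) - 1)
      = ∏ i ∈ range j, ((p : ℤ) ^ (i + 1) - 1) := by
    rw [← prod_range_reflect (fun i => (p : ℤ) ^ (i + 1) - 1) j]
    refine prod_congr rfl fun i hi => ?_
    rw [mem_range] at hi
    congr 2
    omega
  rw [step1, prod_mul_distrib, prod_pow_eq_pow_sum, step3]

theorem my_arith (p n k m N : ℕ) (hp : 2 ≤ p) (hkm : m + k = n)
    (hN : N * ((∏ i ∈ range k, (p ^ k - p ^ i)) *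
        ((∏ i ∈ range m, (p ^ m - p ^ i)) * p ^ (k * m)))
      = ∏ i ∈ range n, (p ^ n - p ^ i)) :
    (N : ℤ) * ∏ i ∈ range k, ((p : ℤ) ^ (i + 1) - 1)
      = ∏ i ∈ range k, ((p : ℤ) ^ (m + i + 1) - 1) := by
  have hcast : ∀ j : ℕ, ((∏ i ∈ range j, (p ^ j - p ^ i) : ℕ) : ℤ)
      = ∏ i ∈ range j, ((p : ℤ) ^ j - (p : ℤ) ^ i) := by
    intro j
    rw [Nat.cast_prod]
    refine prod_congr rfl fun i hi => ?_
    rw [mem_range] at hi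
    rw [Nat.cast_sub (Nat.pow_le_pow_right (by omega) hi.le)]
    push_cast
    ring
  have E : (N : ℤ) * ((∏ i ∈ range k, ((p:ℤ) ^ k - (p:ℤ) ^ i)) *
        ((∏ i ∈ range m, ((p:ℤ) ^ m - (p:ℤ) ^ i)) * (p:ℤ) ^ (k * m)))
      = ∏ i ∈ range n, ((p:ℤ) ^ n - (p:ℤ) ^ i) := by
    rw [← hcast, ← hcast, ← hcast]
    exact_mod_cast congrArg (Nat.cast : ℕ → ℤ) hN
  rw [my_factor, my_factor, my_factor] at E
  -- split the range-n product
  have hsplit : ∏ i ∈ range n, ((p : ℤ) ^ (i + 1) - 1)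
      = (∏ i ∈ range m, ((p : ℤ) ^ (i + 1) - 1)) *
        ∏ i ∈ range k, ((p : ℤ) ^ (m + i + 1) - 1) := by
    rw [← hkm, prod_range_add]
  have hsum : (∑ i ∈ range n, i) = (∑ i ∈ range m, i) + ((∑ i ∈ range k, i) + k * m) := by
    rw [← hkm, sum_range_add]
    congr 1
    rw [sum_add_distrib, sum_const, card_range]
    ring
  rw [hsplit, hsum] at E
  set Fk := ∏ i ∈ range k, ((p : ℤ) ^ (i + 1) - 1)
  set Fm := ∏ i ∈ range m, ((p : ℤ) ^ (i + 1) - 1)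
  set Bk := ∏ i ∈ range k, ((p : ℤ) ^ (m + i + 1) - 1)
  have hFm : Fm ≠ 0 := by
    refine ne_of_gt (prod_pos fun i hi => ?_)
    have : (2 : ℤ) ≤ (p : ℤ) := by exact_mod_cast hp
    have h1 : (2 : ℤ) ^ (i + 1) ≤ (p : ℤ) ^ (i + 1) := pow_le_pow_left₀ (by norm_num) this _
    have h2 : (1 : ℤ) < 2 ^ (i + 1) := one_lt_pow₀ (by norm_num) (by omega)
    omega
  have hp0 : (p : ℤ) ≠ 0 := by positivity
  have hC : (p : ℤ) ^ ((∑ i ∈ range m, i) + ((∑ i ∈ range k, i) + k * m)) * Fm ≠ 0 :=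
    mul_ne_zero (pow_ne_zero _ hp0) hFm
  refine mul_right_cancel₀ hC ?_
  rw [pow_add, pow_add] at E ⊢
  linear_combination E



variable {κ : Type*} [Field κ] [Fintype κ] [DecidableEq κ]

/-- block-upper-triangular condition -/
def myBl (n k : ℕ) (M : Matrix (Fin n) (Fin n) κ) : Prop :=
  ∀ i j : Fin n, k ≤ (i : ℕ) → (j : ℕ) < k → M i j = 0

theorem myBl_mul {n k : ℕ} {M N : Matrix (Fin n) (Fin n) κ} (hM : myBl n k M)
    (hN : myBl n k N) : myBl n k (M * N) := by
  intro i j hi hj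
  rw [Matrix.mul_apply]
  refine Finset.sum_eq_zero fun l _ => ?_
  rcases lt_or_ge (l : ℕ) k with h | h
  · rw [hM i l hi h, zero_mul]
  · rw [hN l j h hj, mul_zero]

theorem myBl_one {n k : ℕ} : myBl n k (1 : Matrix (Fin n) (Fin n) κ) := by
  intro i j hi hj
  exact Matrix.one_apply_ne (by intro h; rw [h] at hi; omega)

/-- the parabolic subgroup -/
def myP (n k : ℕ) : Subgroup (GL (Fin n) κ) where
  carrier := {A | myBl n k (A : Matrix (Fin n) (Fin n) κ) ∧
    myBl n k ((A⁻¹ : GL (Fin n) κ) : Matrix (Fin n) (Fin n) κ)}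
  mul_mem' := by
    rintro a b ⟨ha1, ha2⟩ ⟨hb1, hb2⟩
    constructor
    · rw [Units.val_mul]; exact myBl_mul ha1 hb1
    · rw [_root_.mul_inv_rev, Units.val_mul]; exact myBl_mul hb2 ha2
  one_mem' := ⟨myBl_one, by rw [inv_one]; exact myBl_one⟩
  inv_mem' := by
    rintro a ⟨h1, h2⟩
    exact ⟨h2, by rw [inv_inv]; exact h1⟩

theorem mem_myP {n k : ℕ} (A : GL (Fin n) κ) :
    A ∈ myP (κ := κ) n k ↔ myBl n k (A : Matrix (Fin n) (Fin n) κ) ∧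
      myBl n k ((A⁻¹ : GL (Fin n) κ) : Matrix (Fin n) (Fin n) κ) := Iff.rfl

section equiv

variable {n k m : ℕ} (hkm : k + m = n)

theorem blocks11_mul {M N : Matrix (Fin k ⊕ Fin m) (Fin k ⊕ Fin m) κ}
    (hN : ∀ b a, N (Sum.inr b) (Sum.inl a) = 0) (h : M * N = 1) :
    M.toBlocks₁₁ * N.toBlocks₁₁ = 1 := by
  ext a a'
  have h2 := congrFun (congrFun h (Sum.inl a)) (Sum.inl a')
  rw [Matrix.mul_apply, Fintype.sum_sum_type] at h2
  simp only [hN, mul_zero, Finset.sum_const_zero, add_zero] at h2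
  rw [Matrix.mul_apply]
  rw [show ∑ x : Fin k, M.toBlocks₁₁ a x * N.toBlocks₁₁ x a' =
    ∑ x : Fin k, M (Sum.inl a) (Sum.inl x) * N (Sum.inl x) (Sum.inl a') from rfl, h2]
  simp [Matrix.one_apply, Sum.inl.injEq]

theorem blocks22_mul {M N : Matrix (Fin k ⊕ Fin m) (Fin k ⊕ Fin m) κ}
    (hM : ∀ b a, M (Sum.inr b) (Sum.inl a) = 0) (h : M * N = 1) :
    M.toBlocks₂₂ * N.toBlocks₂₂ = 1 := by
  ext b b'
  have h2 := congrFun (congrFun h (Sum.inr b)) (Sum.inr b')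
  rw [Matrix.mul_apply, Fintype.sum_sum_type] at h2
  simp only [hM, zero_mul, Finset.sum_const_zero, zero_add] at h2
  rw [Matrix.mul_apply]
  rw [show ∑ x : Fin m, M.toBlocks₂₂ b x * N.toBlocks₂₂ x b' =
    ∑ x : Fin m, M (Sum.inr b) (Sum.inr x) * N (Sum.inr x) (Sum.inr b') from rfl, h2]
  simp [Matrix.one_apply, Sum.inr.injEq]

/-- the reindexing equivalence -/
def myE (hkm : k + m = n) : Fin k ⊕ Fin m ≃ Fin n :=
  finSumFinEquiv.trans (finCongr hkm)

theorem myE_inl (a : Fin k) : ((myE hkm (Sum.inl a) : Fin n) : ℕ) = (a : ℕ) := by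
  simp [myE]

theorem myE_inr (b : Fin m) : ((myE hkm (Sum.inr b) : Fin n) : ℕ) = k + (b : ℕ) := by
  simp [myE]

theorem myBl_of_blocks {M : Matrix (Fin k ⊕ Fin m) (Fin k ⊕ Fin m) κ}
    (hM : ∀ b a, M (Sum.inr b) (Sum.inl a) = 0) :
    myBl n k (M.submatrix (myE hkm).symm (myE hkm).symm) := by
  intro i j hi hj
  rw [Matrix.submatrix_apply]
  rcases h1 : (myE hkm).symm i with a | b
  · exfalso
    have := myE_inl hkm a
    rw [← h1, Equiv.apply_symm_apply] at this
    omega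
  · rcases h2 : (myE hkm).symm j with a' | b'
    · exact hM b a'
    · exfalso
      have := myE_inr hkm b'
      rw [← h2, Equiv.apply_symm_apply] at this
      omega

theorem blocks_of_myBl {A : Matrix (Fin n) (Fin n) κ} (hA : myBl n k A)
    (b : Fin m) (a : Fin k) :
    A.submatrix (myE hkm) (myE hkm) (Sum.inr b) (Sum.inl a) = 0 := by
  rw [Matrix.submatrix_apply]
  exact hA _ _ (by rw [myE_inr]; omega) (by rw [myE_inl]; omega)

/-- the equivalence between the parabolic and block data -/
noncomputable def myPEquiv (hkm : k + m = n) :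
    (GL (Fin k) κ × GL (Fin m) κ × Matrix (Fin k) (Fin m) κ) ≃ myP (κ := κ) n k where
  toFun x :=
    ⟨{ val := (fromBlocks ((x.1 : Matrix _ _ κ)) x.2.2 0 ((x.2.1 : Matrix _ _ κ))).submatrix
          (myE hkm).symm (myE hkm).symm
       inv := (fromBlocks (((x.1)⁻¹ : GL (Fin k) κ) : Matrix _ _ κ)
            (-((((x.1)⁻¹ : GL (Fin k) κ) : Matrix (Fin k) (Fin k) κ) * x.2.2 *
              (((x.2.1)⁻¹ : GL (Fin m) κ) : Matrix (Fin m) (Fin m) κ)))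
            0 (((x.2.1)⁻¹ : GL (Fin m) κ) : Matrix _ _ κ)).submatrix
          (myE hkm).symm (myE hkm).symm
       val_inv := by
         rw [Matrix.submatrix_mul_equiv, Matrix.fromBlocks_multiply]
         simp only [Matrix.mul_neg, Matrix.zero_mul, Matrix.mul_zero, add_zero, zero_add,
           Matrix.neg_mul, ← Matrix.mul_assoc, Units.mul_inv, Matrix.one_mul,
           neg_add_cancel, neg_zero, Matrix.fromBlocks_one]
         rw [Matrix.submatrix_one_equiv]
       inv_val := by
         rw [Matrix.submatrix_mul_equiv, Matrix.fromBlocks_multiply]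
         simp only [Matrix.neg_mul, Matrix.mul_assoc, Units.inv_mul, Matrix.mul_one,
           Matrix.mul_zero, Matrix.zero_mul, zero_add, add_zero, add_neg_cancel,
           neg_zero, Matrix.fromBlocks_one]
         rw [Matrix.submatrix_one_equiv] },
     myBl_of_blocks hkm (fun b a => rfl), myBl_of_blocks hkm (fun b a => rfl)⟩
  invFun x :=
    ⟨{ val := Matrix.toBlocks₁₁ (((x : GL (Fin n) κ) : Matrix _ _ κ).submatrix (myE hkm) (myE hkm))
       inv := Matrix.toBlocks₁₁ ((((x : GL (Fin n) κ)⁻¹ : GL (Fin n) κ) : Matrix _ _ κ).submatrix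
          (myE hkm) (myE hkm))
       val_inv := blocks11_mul (blocks_of_myBl hkm x.2.2)
          (by rw [Matrix.submatrix_mul_equiv, Units.mul_inv, Matrix.submatrix_one_equiv])
       inv_val := blocks11_mul (blocks_of_myBl hkm x.2.1)
          (by rw [Matrix.submatrix_mul_equiv, Units.inv_mul, Matrix.submatrix_one_equiv]) },
     { val := Matrix.toBlocks₂₂ (((x : GL (Fin n) κ) : Matrix _ _ κ).submatrix (myE hkm) (myE hkm))
       inv := Matrix.toBlocks₂₂ ((((x : GL (Fin n) κ)⁻¹ : GL (Fin n) κ) : Matrix _ _ κ).submatrix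
          (myE hkm) (myE hkm))
       val_inv := blocks22_mul (blocks_of_myBl hkm x.2.1)
          (by rw [Matrix.submatrix_mul_equiv, Units.mul_inv, Matrix.submatrix_one_equiv])
       inv_val := blocks22_mul (blocks_of_myBl hkm x.2.2)
          (by rw [Matrix.submatrix_mul_equiv, Units.inv_mul, Matrix.submatrix_one_equiv]) },
     Matrix.toBlocks₁₂ (((x : GL (Fin n) κ) : Matrix _ _ κ).submatrix (myE hkm) (myE hkm))⟩
  right_inv x := by
    apply Subtype.ext
    apply Units.ext
    show (fromBlocks _ _ 0 _).submatrix _ _ = _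
    have h0 : Matrix.toBlocks₂₁
        (((x : GL (Fin n) κ) : Matrix _ _ κ).submatrix (myE hkm) (myE hkm)) = 0 := by
      ext b a
      exact blocks_of_myBl hkm x.2.1 b a
    rw [← h0, Matrix.fromBlocks_toBlocks, Matrix.submatrix_submatrix,
      Equiv.self_comp_symm, Matrix.submatrix_id_id]
  left_inv := fun ⟨A, D, B⟩ => by
    have hM : ((fromBlocks ((A : Matrix _ _ κ)) B 0
        ((D : Matrix _ _ κ))).submatrix (myE hkm).symm (myE hkm).symm).submatrix
          (myE hkm) (myE hkm)
        = fromBlocks ((A : Matrix _ _ κ)) B 0 ((D : Matrix _ _ κ)) := by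
      rw [Matrix.submatrix_submatrix, Equiv.symm_comp_self, Matrix.submatrix_id_id]
    dsimp only
    refine Prod.ext ?_ (Prod.ext ?_ ?_)
    · apply Units.ext
      show Matrix.toBlocks₁₁ _ = _
      rw [hM, Matrix.toBlocks_fromBlocks₁₁]
    · apply Units.ext
      show Matrix.toBlocks₂₂ _ = _
      rw [hM, Matrix.toBlocks_fromBlocks₂₂]
    · show Matrix.toBlocks₁₂ _ = _
      rw [hM, Matrix.toBlocks_fromBlocks₁₂]

end equiv

theorem myP_card (n k m : ℕ) (hkm : k + m = n) :
    Nat.card (myP (κ := κ) n k) = Nat.card (GL (Fin k) κ) *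
      (Nat.card (GL (Fin m) κ) * Fintype.card κ ^ (k * m)) := by
  rw [← Nat.card_congr (myPEquiv (κ := κ) hkm), Nat.card_prod, Nat.card_prod]
  congr 2
  rw [Nat.card_congr (Matrix.of.symm : Matrix (Fin k) (Fin m) κ ≃ (Fin k → Fin m → κ)),
    Nat.card_eq_fintype_card, Fintype.card_fun, Fintype.card_fun, Fintype.card_fin,
    Fintype.card_fin, ← pow_mul, mul_comm m k]

theorem myP_index (n k m : ℕ) (hkm : k + m = n) :
    (myP (κ := κ) n k).index * (Nat.card (GL (Fin k) κ) *
      (Nat.card (GL (Fin m) κ) * Fintype.card κ ^ (k * m))) = Nat.card (GL (Fin n) κ) := by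
  rw [← myP_card n k m hkm, mul_comm]
  exact Subgroup.card_mul_index _



section padic

variable (p : ℕ) [Fact p.Prime] (n k : ℕ)

noncomputable def myΦ : GL (Fin n) ℤ_[p] →* GL (Fin n) ℚ_[p] :=
  Units.map ((PadicInt.Coe.ringHom (p := p)).mapMatrix (m := Fin n)).toMonoidHom

noncomputable def myπ : GL (Fin n) ℤ_[p] →* GL (Fin n) (ZMod p) :=
  Units.map ((PadicInt.toZMod (p := p)).mapMatrix (m := Fin n)).toMonoidHom

theorem myΦ_coe (u : GL (Fin n) ℤ_[p]) :
    (↑(myΦ p n u) : Matrix (Fin n) (Fin n) ℚ_[p])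
      = ((↑u : Matrix (Fin n) (Fin n) ℤ_[p])).map (PadicInt.Coe.ringHom (p := p)) := rfl

theorem myπ_coe (u : GL (Fin n) ℤ_[p]) :
    (↑(myπ p n u) : Matrix (Fin n) (Fin n) (ZMod p))
      = ((↑u : Matrix (Fin n) (Fin n) ℤ_[p])).map (PadicInt.toZMod (p := p)) := rfl

theorem myι_inj : Function.Injective (PadicInt.Coe.ringHom (p := p)) :=
  Subtype.coe_injective

theorem myΦ_inj : Function.Injective (myΦ p n) := by
  apply Units.map_injective
  intro M N h
  have h2 : (M : Matrix (Fin n) (Fin n) ℤ_[p]).map (PadicInt.Coe.ringHom (p := p))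
      = N.map (PadicInt.Coe.ringHom (p := p)) := h
  ext i j
  have h3 := congrFun (congrFun h2 i) j
  simp only [Matrix.map_apply] at h3
  exact myι_inj p h3

theorem toZMod_zero_iff (x : ℤ_[p]) : PadicInt.toZMod x = 0 ↔ (p : ℤ_[p]) ∣ x := by
  rw [← RingHom.mem_ker, PadicInt.ker_toZMod, PadicInt.maximalIdeal_eq_span_p,
    Ideal.mem_span_singleton]

theorem isUnit_of_toZMod_ne (x : ℤ_[p]) (h : PadicInt.toZMod x ≠ 0) : IsUnit x := by
  by_contra hu
  exact h ((toZMod_zero_iff p x).2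
    (PadicInt.norm_lt_one_iff_dvd x |>.1 (PadicInt.mem_nonunits.1 (mem_nonunits_iff.2 hu))))

theorem myπ_surj : Function.Surjective (myπ p n) := by
  intro A
  set B : Matrix (Fin n) (Fin n) ℤ_[p] :=
    fun i j => (((A : Matrix (Fin n) (Fin n) (ZMod p)) i j).val : ℤ_[p]) with hB
  have hBmap : B.map (PadicInt.toZMod (p := p)) = (A : Matrix (Fin n) (Fin n) (ZMod p)) := by
    ext i j
    simp only [Matrix.map_apply, hB, map_natCast]
    show PadicInt.toZMod ((((A : Matrix (Fin n) (Fin n) (ZMod p)) i j).val : ℤ_[p])) = _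
    rw [map_natCast]
    exact ZMod.natCast_rightInverse (n := p) _
  have hdet : IsUnit B.det := by
    apply isUnit_of_toZMod_ne
    have : PadicInt.toZMod B.det = ((A : Matrix (Fin n) (Fin n) (ZMod p))).det := by
      rw [RingHom.map_det, RingHom.mapMatrix_apply, hBmap]
    rw [this]
    exact IsUnit.ne_zero ((Matrix.isUnit_iff_isUnit_det _).1 A.isUnit)
  refine ⟨((Matrix.isUnit_iff_isUnit_det B).2 hdet).unit, ?_⟩
  apply Units.ext
  show (((Matrix.isUnit_iff_isUnit_det B).2 hdet).unit.val).map (PadicInt.toZMod (p := p)) = _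
  rw [IsUnit.unit_spec, hBmap]



theorem myp_ne : (p : ℚ_[p]) ≠ 0 :=
  Nat.cast_ne_zero.2 (Fact.out : p.Prime).ne_zero

theorem myginv (g : GL (Fin n) ℚ_[p])
    (hg : (g : Matrix (Fin n) (Fin n) ℚ_[p])
      = Matrix.diagonal fun i : Fin n => if (i : ℕ) < k then (p : ℚ_[p]) else 1) :
    ((g⁻¹ : GL (Fin n) ℚ_[p]) : Matrix (Fin n) (Fin n) ℚ_[p])
      = Matrix.diagonal fun i : Fin n => if (i : ℕ) < k then (p : ℚ_[p])⁻¹ else 1 := by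
  have h1 : (g : Matrix (Fin n) (Fin n) ℚ_[p]) *
      Matrix.diagonal (fun i : Fin n => if (i : ℕ) < k then (p : ℚ_[p])⁻¹ else 1) = 1 := by
    rw [hg, Matrix.diagonal_mul_diagonal]
    have h0 : (fun i : Fin n => (if (i : ℕ) < k then (p : ℚ_[p]) else 1) *
        (if (i : ℕ) < k then (p : ℚ_[p])⁻¹ else 1)) = fun _ => (1 : ℚ_[p]) := by
      funext i
      by_cases hik : (i : ℕ) < k
      · rw [if_pos hik, if_pos hik, mul_inv_cancel₀ (myp_ne p)]
      · rw [if_neg hik, if_neg hik, mul_one]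
    rw [h0, Matrix.diagonal_one]
  calc ((g⁻¹ : GL (Fin n) ℚ_[p]) : Matrix (Fin n) (Fin n) ℚ_[p])
      = ((g⁻¹ : GL (Fin n) ℚ_[p]) : Matrix (Fin n) (Fin n) ℚ_[p]) *
        ((g : Matrix (Fin n) (Fin n) ℚ_[p]) *
        Matrix.diagonal (fun i : Fin n => if (i : ℕ) < k then (p : ℚ_[p])⁻¹ else 1)) := by
        rw [h1, Matrix.mul_one]
    _ = (((g⁻¹ : GL (Fin n) ℚ_[p]) : Matrix (Fin n) (Fin n) ℚ_[p]) *
        (g : Matrix (Fin n) (Fin n) ℚ_[p])) *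
        Matrix.diagonal (fun i : Fin n => if (i : ℕ) < k then (p : ℚ_[p])⁻¹ else 1) := by
        rw [Matrix.mul_assoc]
    _ = _ := by rw [g.inv_mul, Matrix.one_mul]

theorem conj_apply (g : GL (Fin n) ℚ_[p])
    (hg : (g : Matrix (Fin n) (Fin n) ℚ_[p])
      = Matrix.diagonal fun i : Fin n => if (i : ℕ) < k then (p : ℚ_[p]) else 1)
    (u : GL (Fin n) ℤ_[p]) (i j : Fin n) :
    ((g : Matrix (Fin n) (Fin n) ℚ_[p]) * (myΦ p n u : Matrix (Fin n) (Fin n) ℚ_[p]) *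
      ((g⁻¹ : GL (Fin n) ℚ_[p]) : Matrix (Fin n) (Fin n) ℚ_[p])) i j
      = (if (i : ℕ) < k then (p : ℚ_[p]) else 1) *
        (PadicInt.Coe.ringHom (p := p) ((u : Matrix (Fin n) (Fin n) ℤ_[p]) i j)) *
        (if (j : ℕ) < k then (p : ℚ_[p])⁻¹ else 1) := by
  rw [hg, myginv p n k g hg, myΦ_coe, Matrix.mul_diagonal, Matrix.diagonal_mul,
    Matrix.map_apply]

theorem my_dir1 (g : GL (Fin n) ℚ_[p])
    (hg : (g : Matrix (Fin n) (Fin n) ℚ_[p])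
      = Matrix.diagonal fun i : Fin n => if (i : ℕ) < k then (p : ℚ_[p]) else 1)
    (u w : GL (Fin n) ℤ_[p]) (h : myΦ p n w = g * myΦ p n u * g⁻¹) :
    myBl n k (((u : Matrix (Fin n) (Fin n) ℤ_[p])).map (PadicInt.toZMod (p := p))) := by
  intro i j hi hj
  have hmat : (myΦ p n w : Matrix (Fin n) (Fin n) ℚ_[p])
      = (g : Matrix (Fin n) (Fin n) ℚ_[p]) * (myΦ p n u : Matrix (Fin n) (Fin n) ℚ_[p]) *
        ((g⁻¹ : GL (Fin n) ℚ_[p]) : Matrix (Fin n) (Fin n) ℚ_[p]) := by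
    rw [h, Units.val_mul, Units.val_mul]
  have h2 := congrFun (congrFun hmat i) j
  rw [conj_apply p n k g hg u i j, myΦ_coe, Matrix.map_apply,
    if_neg (by omega), if_pos hj, one_mul] at h2
  have h3 : PadicInt.Coe.ringHom (p := p) ((u : Matrix (Fin n) (Fin n) ℤ_[p]) i j)
      = PadicInt.Coe.ringHom (p := p) ((w : Matrix (Fin n) (Fin n) ℤ_[p]) i j * (p : ℤ_[p])) := by
    rw [_root_.map_mul, map_natCast, h2]
    field_simp
    rw [mul_div_cancel_right₀ _ (myp_ne p)]
  have h4 := myι_inj p h3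
  rw [Matrix.map_apply, h4, _root_.map_mul, map_natCast, ZMod.natCast_self, mul_zero]
theorem my_dir2 (g : GL (Fin n) ℚ_[p])
    (hg : (g : Matrix (Fin n) (Fin n) ℚ_[p])
      = Matrix.diagonal fun i : Fin n => if (i : ℕ) < k then (p : ℚ_[p]) else 1)
    (u : GL (Fin n) ℤ_[p])
    (h : myBl n k (((u : Matrix (Fin n) (Fin n) ℤ_[p])).map (PadicInt.toZMod (p := p)))) :
    ∃ w, myΦ p n w = g * myΦ p n u * g⁻¹ := by
  classical
  have hdvd : ∀ i j : Fin n, k ≤ (i : ℕ) → (j : ℕ) < k →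
      (p : ℤ_[p]) ∣ (u : Matrix (Fin n) (Fin n) ℤ_[p]) i j := fun i j hi hj =>
    (toZMod_zero_iff p _).1 (by have := h i j hi hj; rwa [Matrix.map_apply] at this)
  set W : Matrix (Fin n) (Fin n) ℤ_[p] := fun i j =>
    if h2 : k ≤ (i : ℕ) ∧ (j : ℕ) < k then (hdvd i j h2.1 h2.2).choose
    else if (i : ℕ) < k ∧ k ≤ (j : ℕ) then (p : ℤ_[p]) * (u : Matrix (Fin n) (Fin n) ℤ_[p]) i j
    else (u : Matrix (Fin n) (Fin n) ℤ_[p]) i j with hW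
  have hWmap : W.map (PadicInt.Coe.ringHom (p := p))
      = (g : Matrix (Fin n) (Fin n) ℚ_[p]) * (myΦ p n u : Matrix (Fin n) (Fin n) ℚ_[p]) *
        ((g⁻¹ : GL (Fin n) ℚ_[p]) : Matrix (Fin n) (Fin n) ℚ_[p]) := by
    ext i j
    rw [Matrix.map_apply, conj_apply p n k g hg u i j]
    by_cases hik : (i : ℕ) < k <;> by_cases hjk : (j : ℕ) < k
    · rw [hW]
      simp only [if_pos hik, if_pos hjk]
      rw [dif_neg (by omega), if_neg (by omega)]
      rw [mul_right_comm, mul_inv_cancel₀ (myp_ne p), one_mul]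
    · rw [hW]
      simp only [if_pos hik, if_neg hjk]
      rw [dif_neg (by omega), if_pos (by omega), _root_.map_mul, map_natCast, mul_one]
    · rw [hW]
      simp only [if_neg hik, if_pos hjk]
      rw [dif_pos (by omega)]
      have hc := (hdvd i j (by omega) hjk).choose_spec
      rw [one_mul]
      conv_rhs => rw [hc]
      rw [_root_.map_mul, map_natCast, mul_comm ((p : ℚ_[p])) _, mul_assoc,
        mul_inv_cancel₀ (myp_ne p), mul_one]
    · rw [hW]
      simp only [if_neg hik, if_neg hjk]
      rw [dif_neg (by omega), if_neg (by omega), one_mul, mul_one]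
  have hdet0 : PadicInt.Coe.ringHom (p := p) W.det
      = PadicInt.Coe.ringHom (p := p) ((u : Matrix (Fin n) (Fin n) ℤ_[p])).det := by
    rw [RingHom.map_det, RingHom.mapMatrix_apply, hWmap, Matrix.det_mul, Matrix.det_mul]
    have h1 : ((g : Matrix (Fin n) (Fin n) ℚ_[p])).det *
        (((g⁻¹ : GL (Fin n) ℚ_[p]) : Matrix (Fin n) (Fin n) ℚ_[p])).det = 1 := by
      rw [← Matrix.det_mul, ← Units.val_mul, mul_inv_cancel, Units.val_one, Matrix.det_one]
    calc ((g : Matrix (Fin n) (Fin n) ℚ_[p])).det *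
          ((myΦ p n u : Matrix (Fin n) (Fin n) ℚ_[p])).det *
          (((g⁻¹ : GL (Fin n) ℚ_[p]) : Matrix (Fin n) (Fin n) ℚ_[p])).det
        = (((g : Matrix (Fin n) (Fin n) ℚ_[p])).det *
          (((g⁻¹ : GL (Fin n) ℚ_[p]) : Matrix (Fin n) (Fin n) ℚ_[p])).det) *
          ((myΦ p n u : Matrix (Fin n) (Fin n) ℚ_[p])).det := by
          ring
      _ = ((myΦ p n u : Matrix (Fin n) (Fin n) ℚ_[p])).det := by rw [h1, one_mul]
      _ = _ := by rw [myΦ_coe, ← RingHom.mapMatrix_apply, ← RingHom.map_det]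
  have hdet1 : W.det = ((u : Matrix (Fin n) (Fin n) ℤ_[p])).det := myι_inj p hdet0
  have hdet : IsUnit W.det := by
    rw [hdet1]
    exact (Matrix.isUnit_iff_isUnit_det _).1 u.isUnit
  refine ⟨((Matrix.isUnit_iff_isUnit_det W).2 hdet).unit, ?_⟩
  apply Units.ext
  show (((Matrix.isUnit_iff_isUnit_det W).2 hdet).unit.val).map (PadicInt.Coe.ringHom (p := p)) = _
  rw [IsUnit.unit_spec, hWmap, Units.val_mul, Units.val_mul]

theorem myClaimA (g : GL (Fin n) ℚ_[p])
    (hg : (g : Matrix (Fin n) (Fin n) ℚ_[p])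
      = Matrix.diagonal fun i : Fin n => if (i : ℕ) < k then (p : ℚ_[p]) else 1)
    (u : GL (Fin n) ℤ_[p]) :
    u ∈ (myP (κ := ZMod p) n k).comap (myπ p n) ↔
      g * myΦ p n u * g⁻¹ ∈
        (Units.map ((PadicInt.Coe.ringHom (p := p)).mapMatrix (m := Fin n)).toMonoidHom).range := by
  constructor
  · intro hu
    have h1 : myBl n k (((u : Matrix (Fin n) (Fin n) ℤ_[p])).map (PadicInt.toZMod (p := p))) := by
      have := ((mem_myP _).1 (Subgroup.mem_comap.1 hu)).1
      rwa [myπ_coe] at this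
    obtain ⟨w, hw⟩ := my_dir2 p n k g hg u h1
    exact ⟨w, hw⟩
  · rintro ⟨w, hw⟩
    have hw' : myΦ p n w = g * myΦ p n u * g⁻¹ := hw
    have hB1 := my_dir1 p n k g hg u w hw'
    have hw2 : myΦ p n w⁻¹ = g * myΦ p n u⁻¹ * g⁻¹ := by
      rw [_root_.map_inv, hw', _root_.map_inv]
      group
    have hB2 := my_dir1 p n k g hg u⁻¹ w⁻¹ hw2
    refine Subgroup.mem_comap.2 ((mem_myP _).2 ⟨?_, ?_⟩)
    · rw [myπ_coe]
      exact hB1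
    · rw [← _root_.map_inv (myπ p n) u, myπ_coe]
      exact hB2

end padic


set_option maxHeartbeats 1000000 in
/-- The double coset `K diag(p,…,p,1,…,1) K` (with `k` entries `p`), for
`K = GL_n(ℤ_p) ⊆ GL_n(ℚ_p)`, is a disjoint union of exactly `binom(n,k)_p` left cosets
`K·g`, where `binom(n,k)_p = ∏_{i=1}^{k} (p^{n-k+i} - 1)/(p^i - 1)` is the Gaussian
binomial coefficient. -/
theorem stmt_7 (p : ℕ) [Fact p.Prime] (n k : ℕ) (hn : 1 ≤ n) (hk : k ≤ n)
    (K : Subgroup (GL (Fin n) ℚ_[p]))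
    (hK : K = (Units.map
      ((PadicInt.Coe.ringHom (p := p)).mapMatrix (m := Fin n)).toMonoidHom).range)
    (g : GL (Fin n) ℚ_[p])
    (hg : (g : Matrix (Fin n) (Fin n) ℚ_[p])
      = Matrix.diagonal fun i : Fin n => if (i : ℕ) < k then (p : ℚ_[p]) else 1) :
    ∃ T : Finset (GL (Fin n) ℚ_[p]),
      ((T.card : ℤ) * ∏ i ∈ Finset.range k, ((p : ℤ) ^ (i + 1) - 1)
        = ∏ i ∈ Finset.range k, ((p : ℤ) ^ (n - k + i + 1) - 1)) ∧
      (K : Set (GL (Fin n) ℚ_[p])) * {g} * (K : Set (GL (Fin n) ℚ_[p]))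
        = ⋃ t ∈ (T : Set (GL (Fin n) ℚ_[p])), (K : Set (GL (Fin n) ℚ_[p])) * {t} ∧
      (T : Set (GL (Fin n) ℚ_[p])).PairwiseDisjoint
        (fun t => (K : Set (GL (Fin n) ℚ_[p])) * {t}) := by
  classical
  set m := n - k with hm
  have hkm : k + m = n := by omega
  have hΦinj := myΦ_inj p n
  have hπsurj := myπ_surj p n
  set H' : Subgroup (GL (Fin n) ℤ_[p]) := (myP (κ := ZMod p) n k).comap (myπ p n) with hH'
  have hH : ∀ u, u ∈ H' ↔ g * myΦ p n u * g⁻¹ ∈ K := by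
    intro u
    rw [hK]
    exact myClaimA p n k g hg u
  haveI hfinGL : Finite (GL (Fin n) (ZMod p)) := inferInstance
  have hPindex : (myP (κ := ZMod p) n k).index ≠ 0 :=
    Subgroup.index_ne_zero_of_finite
  have hidx : H'.index = (myP (κ := ZMod p) n k).index :=
    (myP (κ := ZMod p) n k).index_comap_of_surjective hπsurj
  have hQfin : Finite (GL (Fin n) ℤ_[p] ⧸ H') := by
    have h0 : Nat.card (GL (Fin n) ℤ_[p] ⧸ H') ≠ 0 := by
      rw [← Subgroup.index_eq_card, hidx]
      exact hPindex
    exact (Nat.card_ne_zero.1 h0).2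
  haveI := hQfin
  haveI : Fintype (GL (Fin n) ℤ_[p] ⧸ H') := Fintype.ofFinite _
  obtain ⟨T, hTcard, hTcover, hTdisj⟩ := my_decomp (myΦ p n) hΦinj K hK g H' hH
  refine ⟨T, ?_, hTcover, hTdisj⟩
  have hN : T.card = (myP (κ := ZMod p) n k).index := by
    rw [hTcard, ← Subgroup.index_eq_card, hidx]
  have hLag := myP_index (κ := ZMod p) n k m hkm
  have hzc : Fintype.card (ZMod p) = p := ZMod.card p
  have hGL : ∀ j : ℕ, Nat.card (GL (Fin j) (ZMod p))
      = ∏ i ∈ Finset.range j, (p ^ j - p ^ i) := by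
    intro j
    rw [Matrix.card_GL_field, hzc]
    exact Fin.prod_univ_eq_prod_range (fun i => p ^ j - p ^ i) j
  rw [hzc, hGL, hGL, hGL] at hLag
  have hNat : T.card * ((∏ i ∈ Finset.range k, (p ^ k - p ^ i)) *
      ((∏ i ∈ Finset.range m, (p ^ m - p ^ i)) * p ^ (k * m)))
      = ∏ i ∈ Finset.range n, (p ^ n - p ^ i) := by
    rw [hN]
    exact hLag
  exact my_arith p n k m T.card (Fact.out : p.Prime).two_le (by omega) hNat
end
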